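/- The capacity of the constraint forbidding 000 and 010 equals the golden-ratio capacity of the RLL (0,1) constraint: lim_{m→∞} (log₂ N(m)) / m = log₂((1 + √5)/2). -/

import Mathlib

/-- The RR constraint: no index `i` with `i + 2 ≤ m - 1` such that `c i = 0` and `c (i+2) = 0`
(bit `false` plays the role of `0`, bit `true` the role of `1`). -/
def RRok (m : ℕ) (c : Fin m → Bool) : Prop :=
  ∀ i j : Fin m, (j : ℕ) = (i : ℕ) + 2 → ¬(c i = false ∧ c j = false)

instance (m : ℕ) : DecidablePred (RRok m) := fun c => by
  unfold RRok; infer_instance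

/-- The LOCO code `RC_m`: all binary words of length `m` satisfying the RR constraint. -/
def RC (m : ℕ) : Finset (Fin m → Bool) := Finset.univ.filter (RRok m)

/-- `N m = |RC_m|`. -/
def N (m : ℕ) : ℕ := (RC m).card

/-- No two adjacent zeros. -/
def ok2 (n : ℕ) (c : Fin n → Bool) : Prop :=
  ∀ i j : Fin n, (j : ℕ) = (i : ℕ) + 1 → ¬(c i = false ∧ c j = false)

instance (n : ℕ) : DecidablePred (ok2 n) := fun c => by
  unfold ok2; infer_instance

def D (n : ℕ) : ℕ := (Finset.univ.filter (ok2 n)).card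

lemma D_zero : D 0 = 1 := by decide

lemma D_one : D 1 = 2 := by decide

/-- Append a bit at the end. -/
def app1 (n : ℕ) (d : Fin n → Bool) (v : Bool) : Fin (n + 1) → Bool :=
  fun k => if h : (k : ℕ) < n then d ⟨(k : ℕ), h⟩ else v

lemma app1_lt {n : ℕ} (d : Fin n → Bool) (v : Bool) (k : Fin (n + 1)) (h : (k : ℕ) < n) :
    app1 n d v k = d ⟨(k : ℕ), h⟩ := dif_pos h

lemma app1_eq {n : ℕ} (d : Fin n → Bool) (v : Bool) (k : Fin (n + 1)) (h : ¬ (k : ℕ) < n) :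
    app1 n d v k = v := dif_neg h

/-- Restriction. -/
def res1 (n : ℕ) (c : Fin (n + 1) → Bool) : Fin n → Bool :=
  fun k => c ⟨(k : ℕ), by omega⟩

lemma card_true (n : ℕ) :
    (Finset.univ.filter (fun c : Fin (n + 2) → Bool =>
        ok2 (n + 2) c ∧ c (Fin.last (n + 1)) = true)).card = D (n + 1) := by
  apply Finset.card_nbij' (i := res1 (n + 1)) (j := fun d => app1 (n + 1) d true)
  · intro c hc
    simp only [Finset.mem_coe, Finset.mem_filter, Finset.mem_univ, true_and] at hc ⊢
    intro i j hij
    exact hc.1 ⟨i, by omega⟩ ⟨j, by omega⟩ (by simpa using hij)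
  · intro d hd
    simp only [Finset.mem_coe, Finset.mem_filter, Finset.mem_univ, true_and] at hd ⊢
    constructor
    · intro i j hij
      have hij' : (j : ℕ) = (i : ℕ) + 1 := hij
      by_cases hj : (j : ℕ) < n + 1
      · rw [app1_lt d true j hj, app1_lt d true i (by omega)]
        exact hd ⟨(i : ℕ), by omega⟩ ⟨(j : ℕ), hj⟩ (by simpa using hij)
      · rw [app1_eq d true j hj]
        simp
    · rw [app1_eq d true _ (by simp)]
  · intro c hc
    simp only [Finset.mem_coe, Finset.mem_filter, Finset.mem_univ, true_and] at hc
    funext k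
    dsimp only
    by_cases hk : (k : ℕ) < n + 1
    · rw [app1_lt _ _ _ hk]; rfl
    · rw [app1_eq _ _ _ hk]
      have : k = Fin.last (n + 1) := by
        apply Fin.ext; simp only [Fin.val_last]; omega
      rw [this, hc.2]
  · intro d _
    funext k
    show app1 (n + 1) d true ⟨(k : ℕ), _⟩ = d k
    rw [app1_lt d true _ (by simpa using k.isLt)]

/-- Extend by `true` then `false`. -/
def ext2 (n : ℕ) (d : Fin n → Bool) : Fin (n + 2) → Bool :=
  fun k => if h : (k : ℕ) < n then d ⟨(k : ℕ), h⟩ else if (k : ℕ) = n then true else false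

lemma ext2_lt {n : ℕ} (d : Fin n → Bool) (k : Fin (n + 2)) (h : (k : ℕ) < n) :
    ext2 n d k = d ⟨(k : ℕ), h⟩ := dif_pos h

lemma ext2_mid {n : ℕ} (d : Fin n → Bool) (k : Fin (n + 2)) (h : (k : ℕ) = n) :
    ext2 n d k = true := by
  unfold ext2
  rw [dif_neg (by omega), if_pos h]

lemma ext2_last {n : ℕ} (d : Fin n → Bool) (k : Fin (n + 2)) (h : (k : ℕ) = n + 1) :
    ext2 n d k = false := by
  unfold ext2
  rw [dif_neg (by omega), if_neg (by omega)]

lemma card_false (n : ℕ) :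
    (Finset.univ.filter (fun c : Fin (n + 2) → Bool =>
        ok2 (n + 2) c ∧ ¬ c (Fin.last (n + 1)) = true)).card = D n := by
  apply Finset.card_nbij' (i := fun c => res1 n (res1 (n + 1) c)) (j := ext2 n)
  · intro c hc
    simp only [Finset.mem_coe, Finset.mem_filter, Finset.mem_univ, true_and] at hc ⊢
    intro i j hij
    exact hc.1 ⟨i, by omega⟩ ⟨j, by omega⟩ (by simpa using hij)
  · intro d hd
    simp only [Finset.mem_coe, Finset.mem_filter, Finset.mem_univ, true_and, Bool.not_eq_true] at hd ⊢
    refine ⟨?_, ?_⟩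
    · intro i j hij
      have hij' : (j : ℕ) = (i : ℕ) + 1 := hij
      by_cases hj : (j : ℕ) < n
      · rw [ext2_lt d j hj, ext2_lt d i (by omega)]
        exact hd ⟨(i : ℕ), by omega⟩ ⟨(j : ℕ), hj⟩ (by simpa using hij)
      · by_cases hj2 : (j : ℕ) = n
        · rw [ext2_mid d j hj2]
          simp
        · rw [ext2_mid d i (by omega)]
          simp
    · rw [ext2_last d _ (by simp)]
  · intro c hc
    simp only [Finset.mem_coe, Finset.mem_filter, Finset.mem_univ, true_and, Bool.not_eq_true] at hc
    funext k
    by_cases hk : (k : ℕ) < n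
    · rw [ext2_lt _ _ hk]
      exact (congrArg c (Fin.ext rfl)).symm
    · by_cases hk2 : (k : ℕ) = n
      · rw [ext2_mid _ _ hk2]
        have hlast : c (Fin.last (n + 1)) = false := hc.2
        have h2 := hc.1 ⟨n, by omega⟩ (Fin.last (n + 1)) (by simp)
        have hkk : k = (⟨n, by omega⟩ : Fin (n + 2)) := Fin.ext hk2
        rw [hkk]
        rcases Bool.eq_false_or_eq_true (c ⟨n, by omega⟩) with h | h
        · exact h.symm
        · exact absurd ⟨h, hlast⟩ h2
      · rw [ext2_last _ _ (by omega)]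
        have : k = Fin.last (n + 1) := by
          apply Fin.ext; simp only [Fin.val_last]; omega
        rw [this, hc.2]
  · intro d _
    funext k
    show ext2 n d ⟨(k : ℕ), _⟩ = d k
    rw [ext2_lt d _ (by simpa using k.isLt)]

lemma D_rec (n : ℕ) : D (n + 2) = D (n + 1) + D n := by
  have h := Finset.card_filter_add_card_filter_not
    (s := Finset.univ.filter (ok2 (n + 2)))
    (p := fun c : Fin (n + 2) → Bool => c (Fin.last (n + 1)) = true)
  rw [Finset.filter_filter, Finset.filter_filter] at h
  have h1 := card_true n
  have h2 := card_false n
  rw [D, ← h, h1, h2]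

/-- Interleave two words (even and odd positions). -/
def weave (m : ℕ) (p : (Fin ((m + 1) / 2) → Bool) × (Fin (m / 2) → Bool)) : Fin m → Bool :=
  fun k => if h : (k : ℕ) % 2 = 0 then p.1 ⟨(k : ℕ) / 2, by omega⟩
           else p.2 ⟨(k : ℕ) / 2, by omega⟩

lemma weave_even {m : ℕ} (p) (k : Fin m) (h : (k : ℕ) % 2 = 0) :
    weave m p k = p.1 ⟨(k : ℕ) / 2, by omega⟩ := dif_pos h

lemma weave_odd {m : ℕ} (p) (k : Fin m) (h : ¬ (k : ℕ) % 2 = 0) :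
    weave m p k = p.2 ⟨(k : ℕ) / 2, by omega⟩ := dif_neg h

lemma N_eq (m : ℕ) : N m = D ((m + 1) / 2) * D (m / 2) := by
  rw [N, RC]
  unfold D
  rw [← Finset.card_product]
  apply Finset.card_nbij'
    (i := fun c => (fun k : Fin ((m + 1) / 2) => c ⟨2 * (k : ℕ), by omega⟩,
                    fun k : Fin (m / 2) => c ⟨2 * (k : ℕ) + 1, by omega⟩))
    (j := weave m)
  · intro c hc
    simp only [Finset.mem_coe, Finset.mem_filter, Finset.mem_univ, true_and, Finset.mem_product] at hc ⊢
    constructor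
    · intro i j hij
      exact hc ⟨2 * (i : ℕ), by omega⟩ ⟨2 * (j : ℕ), by omega⟩ (by simp; omega)
    · intro i j hij
      exact hc ⟨2 * (i : ℕ) + 1, by omega⟩ ⟨2 * (j : ℕ) + 1, by omega⟩ (by simp; omega)
  · intro p hp
    simp only [Finset.mem_coe, Finset.mem_filter, Finset.mem_univ, true_and, Finset.mem_product] at hp ⊢
    intro i j hij
    have hij' : (j : ℕ) = (i : ℕ) + 2 := hij
    by_cases hi : (i : ℕ) % 2 = 0
    · rw [weave_even p i hi, weave_even p j (by omega)]
      exact hp.1 ⟨(i : ℕ) / 2, by omega⟩ ⟨(j : ℕ) / 2, by omega⟩ (by simp; omega)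
    · rw [weave_odd p i hi, weave_odd p j (by omega)]
      exact hp.2 ⟨(i : ℕ) / 2, by omega⟩ ⟨(j : ℕ) / 2, by omega⟩ (by simp; omega)
  · intro c _
    funext k
    by_cases hk : (k : ℕ) % 2 = 0
    · rw [weave_even _ k hk]
      exact congrArg c (Fin.ext (by simp only [Fin.val_mk]; omega))
    · rw [weave_odd _ k hk]
      exact congrArg c (Fin.ext (by simp only [Fin.val_mk]; omega))
  · intro p _
    apply Prod.ext
    · funext k
      show weave m p ⟨2 * (k : ℕ), _⟩ = p.1 k
      rw [weave_even p _ (by simp only [Fin.val_mk]; omega)]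
      exact congrArg p.1 (Fin.ext (by simp only [Fin.val_mk]; omega))
    · funext k
      show weave m p ⟨2 * (k : ℕ) + 1, _⟩ = p.2 k
      rw [weave_odd p _ (by simp only [Fin.val_mk]; omega)]
      exact congrArg p.2 (Fin.ext (by simp only [Fin.val_mk]; omega))

noncomputable def phi : ℝ := (1 + Real.sqrt 5) / 2

lemma sqrt5_ge : (2 : ℝ) ≤ Real.sqrt 5 := by
  rw [show (2 : ℝ) = Real.sqrt 4 by
    rw [show (4:ℝ) = 2^2 by norm_num, Real.sqrt_sq]; norm_num]
  exact Real.sqrt_le_sqrt (by norm_num)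

lemma sqrt5_le : Real.sqrt 5 ≤ 3 := by
  rw [show (3 : ℝ) = Real.sqrt 9 by
    rw [show (9:ℝ) = 3^2 by norm_num, Real.sqrt_sq]; norm_num]
  exact Real.sqrt_le_sqrt (by norm_num)

lemma phi_gt_one : 1 < phi := by
  have := sqrt5_ge; unfold phi; linarith

lemma phi_sq : phi ^ 2 = phi + 1 := by
  have h5 : Real.sqrt 5 ^ 2 = 5 := Real.sq_sqrt (by norm_num)
  unfold phi; nlinarith [h5]

lemma phi_rec (n : ℕ) : phi ^ (n + 2) = phi ^ (n + 1) + phi ^ n := by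
  have h := phi_sq
  have : phi ^ (n + 2) = phi ^ n * phi ^ 2 := by ring
  rw [this, h]
  ring

lemma D_bounds (n : ℕ) : phi ^ n ≤ (D n : ℝ) ∧ (D n : ℝ) ≤ phi ^ (n + 1) := by
  have hphi := phi_gt_one
  induction n using Nat.twoStepInduction with
  | zero => simp [D_zero]; linarith
  | one =>
      rw [D_one]
      constructor
      · simp only [pow_one]; unfold phi
        have := sqrt5_le
        push_cast; linarith
      · rw [phi_sq]; push_cast; linarith
  | more n ih1 ih2 =>
      rw [D_rec]
      push_cast
      constructor
      · rw [phi_rec]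
        exact add_le_add ih2.1 ih1.1
      · rw [phi_rec (n + 1)]
        exact add_le_add ih2.2 ih1.2

lemma N_bounds (m : ℕ) : phi ^ m ≤ (N m : ℝ) ∧ (N m : ℝ) ≤ phi ^ (m + 2) := by
  have hphi := phi_gt_one
  have hphi0 : (0:ℝ) < phi := by linarith
  have ha := D_bounds ((m + 1) / 2)
  have hb := D_bounds (m / 2)
  have hsum : (m + 1) / 2 + m / 2 = m := by omega
  have hD1 : (0:ℝ) < D ((m+1)/2) := lt_of_lt_of_le (pow_pos hphi0 _) ha.1
  have hD2 : (0:ℝ) < D (m/2) := lt_of_lt_of_le (pow_pos hphi0 _) hb.1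
  rw [N_eq]
  push_cast
  constructor
  · have h1 : phi ^ m = phi ^ ((m+1)/2) * phi ^ (m/2) := by rw [← pow_add, hsum]
    rw [h1]
    exact mul_le_mul ha.1 hb.1 (pow_pos hphi0 _).le hD1.le
  · have h2 : phi ^ (m + 2) = phi ^ ((m+1)/2 + 1) * phi ^ (m/2 + 1) := by
      rw [← pow_add]; congr 1; omega
    rw [h2]
    exact mul_le_mul ha.2 hb.2 hD2.le (pow_pos hphi0 _).le

/-- The capacity of the constraint forbidding `000` and `010`:
`lim_{m→∞} log₂(N m) / m = log₂((1 + √5)/2)`. -/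
theorem stmt11 :
    Filter.Tendsto (fun m : ℕ => Real.logb 2 (N m) / m) Filter.atTop
      (nhds (Real.logb 2 ((1 + Real.sqrt 5) / 2))) := by
  have hphi := phi_gt_one
  have hphi0 : (0:ℝ) < phi := by linarith
  set L := Real.logb 2 phi with hL
  have hL0 : 0 ≤ L := Real.logb_nonneg (by norm_num) (le_of_lt hphi)
  have key : ∀ m : ℕ, (m : ℝ) * L ≤ Real.logb 2 (N m) ∧
      Real.logb 2 (N m) ≤ ((m : ℝ) + 2) * L := by
    intro m
    have hb := N_bounds m
    have hNpos : (0:ℝ) < (N m : ℝ) := lt_of_lt_of_le (pow_pos hphi0 m) hb.1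
    constructor
    · have := (Real.logb_le_logb (by norm_num : (1:ℝ) < 2) (pow_pos hphi0 m) hNpos).2 hb.1
      rwa [Real.logb_pow] at this
    · have := (Real.logb_le_logb (by norm_num : (1:ℝ) < 2) hNpos (pow_pos hphi0 (m+2))).2 hb.2
      rw [Real.logb_pow] at this
      convert this using 2
      push_cast; ring
  show Filter.Tendsto (fun m : ℕ => Real.logb 2 (N m) / m) Filter.atTop (nhds L)
  apply tendsto_of_tendsto_of_tendsto_of_le_of_le'
    (g := fun _ : ℕ => L) (h := fun m : ℕ => L + 2 * L * (1 / m))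
  · exact tendsto_const_nhds
  · have h1 : Filter.Tendsto (fun m : ℕ => 2 * L * (1 / (m:ℝ))) Filter.atTop (nhds (2 * L * 0)) :=
      Filter.Tendsto.const_mul _ tendsto_one_div_atTop_nhds_zero_nat
    have := Filter.Tendsto.const_add L h1
    simpa using this
  · filter_upwards [Filter.eventually_ge_atTop 1] with m hm
    have hmR : (0:ℝ) < m := by exact_mod_cast hm
    rw [le_div_iff₀ hmR]
    have := (key m).1
    linarith
  · filter_upwards [Filter.eventually_ge_atTop 1] with m hm
    have hmR : (0:ℝ) < m := by exact_mod_cast hm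
    rw [div_le_iff₀ hmR]
    have := (key m).2
    have h2 : (L + 2 * L * (1 / m)) * m = ((m:ℝ) + 2) * L := by
      field_simp
    rw [h2]
    exact this
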